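/- Assume λ > 0 and μ > 0, and let (A^(ℓ), B^(ℓ)) be an alternating minimization sequence for F_{λ,μ}. Then all accumulation points of the sequence achieve the same value of F_{λ,μ}, and the successive differences converge to zero: (A^(ℓ+1), B^(ℓ+1)) − (A^(ℓ), B^(ℓ)) → 0 as ℓ → ∞. -/

import Mathlib

open Matrix Kronecker

/-- Spectral norm (ℓ²→ℓ² operator norm) of a real matrix. -/
noncomputable def specNorm {p q : Type*} [Fintype p] [Fintype q] [DecidableEq q]
    (S : Matrix p q ℝ) : ℝ :=
  ‖LinearMap.toContinuousLinearMap (Matrix.toEuclideanLin S)‖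

/-- Frobenius norm of a real matrix. -/
noncomputable def frobNorm {p q : Type*} [Fintype p] [Fintype q] (S : Matrix p q ℝ) : ℝ :=
  Real.sqrt (∑ i, ∑ j, (S i j) ^ 2)

/-- The regularized cost function
`F_{λ,μ}(A,B) = ‖T − ∑ⱼ Aⱼ ⊗ Bⱼ‖₂ + λ ∑ⱼ ‖Aⱼ‖_F² + μ ∑ⱼ ‖Bⱼ‖_F²`. -/
noncomputable def F (m n k : ℕ) (T : Matrix (Fin m × Fin n) (Fin m × Fin n) ℝ)
    (lam mu : ℝ) (A : Fin k → Matrix (Fin m) (Fin m) ℝ)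
    (B : Fin k → Matrix (Fin n) (Fin n) ℝ) : ℝ :=
  specNorm (T - ∑ j, (A j) ⊗ₖ (B j)) + lam * ∑ j, frobNorm (A j) ^ 2
    + mu * ∑ j, frobNorm (B j) ^ 2

/-! ### Auxiliary machinery -/

/-- The linear map sending a matrix to its Euclidean continuous linear map. -/
noncomputable def specMap (p q : Type*) [Fintype p] [Fintype q] [DecidableEq q] :
    Matrix p q ℝ →ₗ[ℝ] (EuclideanSpace ℝ q →L[ℝ] EuclideanSpace ℝ p) :=
  (LinearMap.toContinuousLinearMap :
      (EuclideanSpace ℝ q →ₗ[ℝ] EuclideanSpace ℝ p) ≃ₗ[ℝ] _).toLinearMap ∘ₗ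
    (Matrix.toEuclideanLin).toLinearMap

lemma specNorm_eq_specMap {p q : Type*} [Fintype p] [Fintype q] [DecidableEq q]
    (S : Matrix p q ℝ) : specNorm S = ‖specMap p q S‖ := rfl

lemma specNorm_nonneg {p q : Type*} [Fintype p] [Fintype q] [DecidableEq q]
    (S : Matrix p q ℝ) : 0 ≤ specNorm S := norm_nonneg _

lemma specNorm_continuous {p q : Type*} [Fintype p] [Fintype q] [DecidableEq q] :
    Continuous (specNorm (p := p) (q := q)) :=
  ((specMap p q).continuous_of_finiteDimensional).norm

lemma specNorm_midpoint {p q : Type*} [Fintype p] [Fintype q] [DecidableEq q]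
    (X Y : Matrix p q ℝ) :
    specNorm ((1/2 : ℝ) • X + (1/2 : ℝ) • Y) ≤ (specNorm X + specNorm Y) / 2 := by
  rw [specNorm_eq_specMap, specNorm_eq_specMap, specNorm_eq_specMap, map_add, _root_.map_smul, _root_.map_smul]
  refine le_trans (norm_add_le _ _) ?_
  have hx := norm_smul_le (1/2 : ℝ) ((specMap p q) X)
  have hy := norm_smul_le (1/2 : ℝ) ((specMap p q) Y)
  simp only [Real.norm_eq_abs] at hx hy
  rw [abs_of_nonneg (by norm_num : (0:ℝ) ≤ 1/2)] at hx hy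
  linarith

/-- Sum of squares of all entries of a tuple of matrices. -/
noncomputable def QQ {k : ℕ} {p : Type*} [Fintype p]
    (X : Fin k → Matrix p p ℝ) : ℝ :=
  ∑ j, ∑ i, ∑ i', (X j i i') ^ 2

lemma QQ_nonneg {k : ℕ} {p : Type*} [Fintype p] (X : Fin k → Matrix p p ℝ) :
    0 ≤ QQ X :=
  Finset.sum_nonneg fun _ _ => Finset.sum_nonneg fun _ _ =>
    Finset.sum_nonneg fun _ _ => sq_nonneg _

lemma sq_le_QQ {k : ℕ} {p : Type*} [Fintype p] (X : Fin k → Matrix p p ℝ)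
    (j : Fin k) (i i' : p) : (X j i i') ^ 2 ≤ QQ X := by
  have h1 : (X j i i') ^ 2 ≤ ∑ i', (X j i i') ^ 2 :=
    Finset.single_le_sum (f := fun i' => (X j i i') ^ 2)
      (fun _ _ => sq_nonneg _) (Finset.mem_univ i')
  have h2 : ∑ i', (X j i i') ^ 2 ≤ ∑ i, ∑ i', (X j i i') ^ 2 :=
    Finset.single_le_sum (f := fun i => ∑ i', (X j i i') ^ 2)
      (fun _ _ => Finset.sum_nonneg fun _ _ => sq_nonneg _) (Finset.mem_univ i)
  have h3 : ∑ i, ∑ i', (X j i i') ^ 2 ≤ QQ X :=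
    Finset.single_le_sum (f := fun j => ∑ i, ∑ i', (X j i i') ^ 2)
      (fun _ _ => Finset.sum_nonneg fun _ _ => Finset.sum_nonneg fun _ _ => sq_nonneg _)
      (Finset.mem_univ j)
  exact h1.trans (h2.trans h3)

lemma QQ_parallelogram {k : ℕ} {p : Type*} [Fintype p]
    (x y : Fin k → Matrix p p ℝ) :
    QQ x + QQ y = 2 * QQ ((1/2 : ℝ) • (x + y)) + (1/2) * QQ (x - y) := by
  simp only [QQ, Finset.mul_sum, ← Finset.sum_add_distrib]
  refine Finset.sum_congr rfl fun j _ => Finset.sum_congr rfl fun i _ =>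
    Finset.sum_congr rfl fun i' _ => ?_
  simp only [Pi.smul_apply, Pi.add_apply, Pi.sub_apply, Matrix.smul_apply, Matrix.add_apply,
    Matrix.sub_apply, smul_eq_mul]
  ring

lemma QQ_continuous {k : ℕ} {p : Type*} [Fintype p] :
    Continuous (QQ (k := k) (p := p)) := by
  refine continuous_finset_sum _ fun j _ => continuous_finset_sum _ fun i _ =>
    continuous_finset_sum _ fun i' _ => ?_
  exact ((continuous_apply j).matrix_elem i i').pow 2

lemma sum_frob_sq_eq_QQ {k : ℕ} {p : Type*} [Fintype p]
    (X : Fin k → Matrix p p ℝ) : ∑ j, frobNorm (X j) ^ 2 = QQ X :=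
  Finset.sum_congr rfl fun j _ =>
    Real.sq_sqrt (Finset.sum_nonneg fun _ _ => Finset.sum_nonneg fun _ _ => sq_nonneg _)

lemma F_eq (m n k : ℕ) (T : Matrix (Fin m × Fin n) (Fin m × Fin n) ℝ)
    (lam mu : ℝ) (A : Fin k → Matrix (Fin m) (Fin m) ℝ)
    (B : Fin k → Matrix (Fin n) (Fin n) ℝ) :
    F m n k T lam mu A B
      = specNorm (T - ∑ j, (A j) ⊗ₖ (B j)) + lam * QQ A + mu * QQ B := by
  rw [F, sum_frob_sq_eq_QQ, sum_frob_sq_eq_QQ]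

set_option maxHeartbeats 1000000 in
lemma F_continuous (m n k : ℕ) (T : Matrix (Fin m × Fin n) (Fin m × Fin n) ℝ)
    (lam mu : ℝ) :
    Continuous fun P : (Fin k → Matrix (Fin m) (Fin m) ℝ) ×
        (Fin k → Matrix (Fin n) (Fin n) ℝ) => F m n k T lam mu P.1 P.2 := by
  have heq : (fun P : (Fin k → Matrix (Fin m) (Fin m) ℝ) ×
      (Fin k → Matrix (Fin n) (Fin n) ℝ) => F m n k T lam mu P.1 P.2)
      = fun P => specNorm (T - ∑ j, (P.1 j) ⊗ₖ (P.2 j)) + lam * QQ P.1 + mu * QQ P.2 :=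
    funext fun P => F_eq m n k T lam mu P.1 P.2
  rw [heq]
  have hkron : ∀ j : Fin k, Continuous fun P : (Fin k → Matrix (Fin m) (Fin m) ℝ) ×
      (Fin k → Matrix (Fin n) (Fin n) ℝ) => (P.1 j) ⊗ₖ (P.2 j) := by
    intro j
    apply continuous_matrix
    rintro ⟨i, p⟩ ⟨i', p'⟩
    simp only [Matrix.kronecker_apply]
    exact (((continuous_apply j).comp continuous_fst).matrix_elem i i').mul
      (((continuous_apply j).comp continuous_snd).matrix_elem p p')
  refine ((specNorm_continuous.comp
      (continuous_const.sub (continuous_finset_sum _ fun j _ => hkron j))).add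
      (continuous_const.mul (QQ_continuous.comp continuous_fst))).add
    (continuous_const.mul (QQ_continuous.comp continuous_snd))

lemma entry_tendsto {k : ℕ} {p : Type*} [Fintype p]
    (X : ℕ → Fin k → Matrix p p ℝ)
    (hQ : Filter.Tendsto (fun ℓ => QQ (X ℓ - X (ℓ + 1))) Filter.atTop (nhds 0)) :
    Filter.Tendsto (fun ℓ => X (ℓ + 1) - X ℓ) Filter.atTop
      (nhds (0 : Fin k → Matrix p p ℝ)) := by
    rw [tendsto_pi_nhds]
    intro j
    refine tendsto_pi_nhds.mpr ?_
    intro i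
    refine tendsto_pi_nhds.mpr ?_
    intro i'
    simp only [Pi.zero_apply]
    have hsq : Filter.Tendsto (fun ℓ => ((X (ℓ + 1) - X ℓ) j i i') ^ 2)
        Filter.atTop (nhds 0) := by
      refine squeeze_zero (fun ℓ => sq_nonneg _) (fun ℓ => ?_) hQ
      have he : ((X (ℓ + 1) - X ℓ) j i i') ^ 2 = ((X ℓ - X (ℓ + 1)) j i i') ^ 2 := by
        simp only [Pi.sub_apply, Matrix.sub_apply]; ring
      rw [he]
      exact sq_le_QQ _ j i i'
    have habs : Filter.Tendsto (fun ℓ => |(X (ℓ + 1) - X ℓ) j i i'|)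
        Filter.atTop (nhds 0) := by
      have h := (Real.continuous_sqrt.tendsto 0).comp hsq
      simp only [Function.comp_def, Real.sqrt_sq_eq_abs, Real.sqrt_zero] at h
      exact h
    have hneg : Filter.Tendsto (fun ℓ => -|(X (ℓ + 1) - X ℓ) j i i'|)
        Filter.atTop (nhds 0) := by simpa only [neg_zero] using habs.neg
    exact tendsto_of_tendsto_of_tendsto_of_le_of_le hneg habs
      (fun ℓ => neg_abs_le _) (fun ℓ => le_abs_self _)

/-- For `λ, μ > 0`, all accumulation points of an alternating minimization sequence
for `F_{λ,μ}` achieve the same function value, and successive differences tend to zero. -/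
theorem accumulation_points_same_value_and_successive_differences_tendsto_zero
    (m n k : ℕ) (hm : 0 < m) (hn : 0 < n) (hk : 0 < k)
    (T : Matrix (Fin m × Fin n) (Fin m × Fin n) ℝ)
    (lam mu : ℝ) (hlam : 0 < lam) (hmu : 0 < mu)
    (A : ℕ → Fin k → Matrix (Fin m) (Fin m) ℝ)
    (B : ℕ → Fin k → Matrix (Fin n) (Fin n) ℝ)
    (hA : ∀ ℓ, ∀ A' : Fin k → Matrix (Fin m) (Fin m) ℝ,
      F m n k T lam mu (A (ℓ + 1)) (B ℓ) ≤ F m n k T lam mu A' (B ℓ))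
    (hB : ∀ ℓ, ∀ B' : Fin k → Matrix (Fin n) (Fin n) ℝ,
      F m n k T lam mu (A (ℓ + 1)) (B (ℓ + 1)) ≤ F m n k T lam mu (A (ℓ + 1)) B') :
    (∀ (A₁ B₁ A₂ B₂) (φ₁ φ₂ : ℕ → ℕ), StrictMono φ₁ → StrictMono φ₂ →
      Filter.Tendsto (fun ℓ => (A (φ₁ ℓ), B (φ₁ ℓ))) Filter.atTop (nhds (A₁, B₁)) →
      Filter.Tendsto (fun ℓ => (A (φ₂ ℓ), B (φ₂ ℓ))) Filter.atTop (nhds (A₂, B₂)) →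
      F m n k T lam mu A₁ B₁ = F m n k T lam mu A₂ B₂) ∧
    Filter.Tendsto (fun ℓ => (A (ℓ + 1) - A ℓ, B (ℓ + 1) - B ℓ)) Filter.atTop
      (nhds (0, 0)) := by
  classical
  set f : ℕ → ℝ := fun ℓ => F m n k T lam mu (A ℓ) (B ℓ) with hf_def
  -- strong decrease in the A update
  have stepA : ∀ ℓ, lam / 2 * QQ (A ℓ - A (ℓ + 1))
      ≤ F m n k T lam mu (A ℓ) (B ℓ) - F m n k T lam mu (A (ℓ + 1)) (B ℓ) := by
    intro ℓ
    set x := A ℓ with hx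
    set y := A (ℓ + 1) with hy
    have hmid : T - ∑ j, ((1/2 : ℝ) • (x + y)) j ⊗ₖ (B ℓ j)
        = (1/2 : ℝ) • (T - ∑ j, x j ⊗ₖ (B ℓ j))
          + (1/2 : ℝ) • (T - ∑ j, y j ⊗ₖ (B ℓ j)) := by
      have h1 : ∀ j : Fin k, ((1/2 : ℝ) • (x + y)) j ⊗ₖ (B ℓ j)
          = (1/2 : ℝ) • (x j ⊗ₖ (B ℓ j)) + (1/2 : ℝ) • (y j ⊗ₖ (B ℓ j)) := by
        intro j
        simp only [Pi.smul_apply, Pi.add_apply, Matrix.smul_kronecker, Matrix.add_kronecker,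
          smul_add]
      rw [Finset.sum_congr rfl fun j _ => h1 j, Finset.sum_add_distrib,
        ← Finset.smul_sum, ← Finset.smul_sum]
      module
    have hconv : specNorm (T - ∑ j, ((1/2 : ℝ) • (x + y)) j ⊗ₖ (B ℓ j))
        ≤ (specNorm (T - ∑ j, x j ⊗ₖ (B ℓ j))
            + specNorm (T - ∑ j, y j ⊗ₖ (B ℓ j))) / 2 := by
      rw [hmid]; exact specNorm_midpoint _ _
    have h1 := hA ℓ ((1/2 : ℝ) • (x + y))
    rw [F_eq, F_eq] at h1
    have hm' : QQ ((1/2 : ℝ) • (x + y)) = (QQ x + QQ y) / 2 - (1/4) * QQ (x - y) := by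
      have := QQ_parallelogram x y
      linarith
    have h2 : lam * QQ ((1/2 : ℝ) • (x + y))
        = lam * QQ x / 2 + lam * QQ y / 2 - lam * QQ (x - y) / 4 := by
      rw [hm']; ring
    rw [F_eq, F_eq]
    linarith
  -- strong decrease in the B update
  have stepB : ∀ ℓ, mu / 2 * QQ (B ℓ - B (ℓ + 1))
      ≤ F m n k T lam mu (A (ℓ + 1)) (B ℓ) - F m n k T lam mu (A (ℓ + 1)) (B (ℓ + 1)) := by
    intro ℓ
    set x := B ℓ with hx
    set y := B (ℓ + 1) with hy
    have hmid : T - ∑ j, (A (ℓ + 1) j) ⊗ₖ ((1/2 : ℝ) • (x + y)) j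
        = (1/2 : ℝ) • (T - ∑ j, (A (ℓ + 1) j) ⊗ₖ x j)
          + (1/2 : ℝ) • (T - ∑ j, (A (ℓ + 1) j) ⊗ₖ y j) := by
      have h1 : ∀ j : Fin k, (A (ℓ + 1) j) ⊗ₖ ((1/2 : ℝ) • (x + y)) j
          = (1/2 : ℝ) • ((A (ℓ + 1) j) ⊗ₖ x j) + (1/2 : ℝ) • ((A (ℓ + 1) j) ⊗ₖ y j) := by
        intro j
        simp only [Pi.smul_apply, Pi.add_apply, Matrix.kronecker_smul, Matrix.kronecker_add,
          smul_add]
      rw [Finset.sum_congr rfl fun j _ => h1 j, Finset.sum_add_distrib,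
        ← Finset.smul_sum, ← Finset.smul_sum]
      module
    have hconv : specNorm (T - ∑ j, (A (ℓ + 1) j) ⊗ₖ ((1/2 : ℝ) • (x + y)) j)
        ≤ (specNorm (T - ∑ j, (A (ℓ + 1) j) ⊗ₖ x j)
            + specNorm (T - ∑ j, (A (ℓ + 1) j) ⊗ₖ y j)) / 2 := by
      rw [hmid]; exact specNorm_midpoint _ _
    have h1 := hB ℓ ((1/2 : ℝ) • (x + y))
    rw [F_eq, F_eq] at h1
    have hm' : QQ ((1/2 : ℝ) • (x + y)) = (QQ x + QQ y) / 2 - (1/4) * QQ (x - y) := by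
      have := QQ_parallelogram x y
      linarith
    have h2 : mu * QQ ((1/2 : ℝ) • (x + y))
        = mu * QQ x / 2 + mu * QQ y / 2 - mu * QQ (x - y) / 4 := by
      rw [hm']; ring
    rw [F_eq, F_eq]
    linarith
  have hf1 : ∀ ℓ, F m n k T lam mu (A (ℓ + 1)) (B ℓ) ≤ f ℓ := fun ℓ => hA ℓ (A ℓ)
  have hf2 : ∀ ℓ, f (ℓ + 1) ≤ F m n k T lam mu (A (ℓ + 1)) (B ℓ) := fun ℓ => hB ℓ (B ℓ)
  have hanti : Antitone f :=
    antitone_nat_of_succ_le fun ℓ => (hf2 ℓ).trans (hf1 ℓ)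
  have hfnn : ∀ ℓ, 0 ≤ f ℓ := by
    intro ℓ
    have h := specNorm_nonneg (T - ∑ j, (A ℓ j) ⊗ₖ (B ℓ j))
    have h1 := QQ_nonneg (A ℓ)
    have h2 := QQ_nonneg (B ℓ)
    have := F_eq m n k T lam mu (A ℓ) (B ℓ)
    nlinarith [mul_nonneg hlam.le h1, mul_nonneg hmu.le h2]
  have hbdd : BddBelow (Set.range f) := ⟨0, by rintro x ⟨ℓ, rfl⟩; exact hfnn ℓ⟩
  set L : ℝ := ⨅ ℓ, f ℓ with hL_def
  have hL : Filter.Tendsto f Filter.atTop (nhds L) := tendsto_atTop_ciInf hanti hbdd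
  have hL' : Filter.Tendsto (fun ℓ => f (ℓ + 1)) Filter.atTop (nhds L) :=
    hL.comp (Filter.tendsto_add_atTop_nat 1)
  have hdiff : Filter.Tendsto (fun ℓ => f ℓ - f (ℓ + 1)) Filter.atTop (nhds 0) := by
    simpa using hL.sub hL'
  -- QQ of differences tends to zero
  have hQA : Filter.Tendsto (fun ℓ => QQ (A ℓ - A (ℓ + 1))) Filter.atTop (nhds 0) := by
    have hb : ∀ ℓ, QQ (A ℓ - A (ℓ + 1)) ≤ 2 / lam * (f ℓ - f (ℓ + 1)) := by
      intro ℓ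
      have hst : lam / 2 * QQ (A ℓ - A (ℓ + 1)) ≤ f ℓ - f (ℓ + 1) := by
        have := stepA ℓ; have := hf2 ℓ; linarith
      have he : QQ (A ℓ - A (ℓ + 1)) = 2 / lam * (lam / 2 * QQ (A ℓ - A (ℓ + 1))) := by
        field_simp
      rw [he]
      exact mul_le_mul_of_nonneg_left hst (by positivity)
    have hg : Filter.Tendsto (fun ℓ => 2 / lam * (f ℓ - f (ℓ + 1))) Filter.atTop (nhds 0) := by
      simpa using hdiff.const_mul (2 / lam)
    exact squeeze_zero (fun ℓ => QQ_nonneg _) hb hg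
  have hQB : Filter.Tendsto (fun ℓ => QQ (B ℓ - B (ℓ + 1))) Filter.atTop (nhds 0) := by
    have hb : ∀ ℓ, QQ (B ℓ - B (ℓ + 1)) ≤ 2 / mu * (f ℓ - f (ℓ + 1)) := by
      intro ℓ
      have hst : mu / 2 * QQ (B ℓ - B (ℓ + 1)) ≤ f ℓ - f (ℓ + 1) := by
        have := stepB ℓ; have := hf1 ℓ; linarith
      have he : QQ (B ℓ - B (ℓ + 1)) = 2 / mu * (mu / 2 * QQ (B ℓ - B (ℓ + 1))) := by
        field_simp
      rw [he]
      exact mul_le_mul_of_nonneg_left hst (by positivity)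
    have hg : Filter.Tendsto (fun ℓ => 2 / mu * (f ℓ - f (ℓ + 1))) Filter.atTop (nhds 0) := by
      simpa using hdiff.const_mul (2 / mu)
    exact squeeze_zero (fun ℓ => QQ_nonneg _) hb hg
  constructor
  · -- all accumulation points have the same value
    intro A₁ B₁ A₂ B₂ φ₁ φ₂ hφ₁ hφ₂ hc₁ hc₂
    have hFcont : Continuous fun P : (Fin k → Matrix (Fin m) (Fin m) ℝ) ×
        (Fin k → Matrix (Fin n) (Fin n) ℝ) => F m n k T lam mu P.1 P.2 :=
      F_continuous m n k T lam mu
    have e₁ : Filter.Tendsto (fun ℓ => f (φ₁ ℓ)) Filter.atTop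
        (nhds (F m n k T lam mu A₁ B₁)) := by
      have e₀ := (hFcont.tendsto (A₁, B₁)).comp hc₁
      exact e₀
    have e₂ : Filter.Tendsto (fun ℓ => f (φ₂ ℓ)) Filter.atTop
        (nhds (F m n k T lam mu A₂ B₂)) := by
      have e₀ := (hFcont.tendsto (A₂, B₂)).comp hc₂
      exact e₀
    have e₁' : Filter.Tendsto (fun ℓ => f (φ₁ ℓ)) Filter.atTop (nhds L) :=
      hL.comp hφ₁.tendsto_atTop
    have e₂' : Filter.Tendsto (fun ℓ => f (φ₂ ℓ)) Filter.atTop (nhds L) :=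
      hL.comp hφ₂.tendsto_atTop
    rw [tendsto_nhds_unique e₁ e₁', tendsto_nhds_unique e₂ e₂']
  · -- successive differences tend to zero
    have tA := entry_tendsto A hQA
    have tB := entry_tendsto B hQB
    exact Filter.Tendsto.prodMk_nhds tA tB
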